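/- arXiv:1004.2844 — 2 statements merged into one kernel-verified Lean document; each statement's English description precedes it below -/
import Mathlib

section
/- If the weight matrices satisfy A_i A_j^H + A_j A_i^H = 0, then for every complex channel matrix H, the columns h_i and h_j of the equivalent real channel matrix H_eq = (I ⊗ Ȟ)·G are orthogonal: ⟨h_i, h_j⟩ = 0, where G is the generator matrix whose i-th column is the realified vectorization of A_i. -/
open Matrix Finset Kronecker

/-- The realification `Ȟ` of a complex channel matrix `H`: each entry `x` is replaced by
the 2×2 block `[[Re x, −Im x],[Im x, Re x]]`. -/
def checkMat {nr n : ℕ} (H : Matrix (Fin nr) (Fin n) ℂ) :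
    Matrix (Fin nr × Fin 2) (Fin n × Fin 2) ℝ := fun p q =>
  if p.2 = 0 then (if q.2 = 0 then (H p.1 q.1).re else -(H p.1 q.1).im)
  else (if q.2 = 0 then (H p.1 q.1).im else (H p.1 q.1).re)

/-- The generator matrix `G` of a linear STBC: its `k`-th column is the realified
vectorization of the weight matrix `A_k` (columns stacked, real and imaginary parts
interleaved). -/
def genMat {n K : ℕ} (A : Fin K → Matrix (Fin n) (Fin n) ℂ) :
    Matrix (Fin n × Fin n × Fin 2) (Fin K) ℝ := fun idx k =>
  if idx.2.2 = 0 then (A k idx.2.1 idx.1).re else (A k idx.2.1 idx.1).im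

/-- The equivalent real channel matrix `H_eq = (I_n ⊗ Ȟ)·G`. -/
def heqMat {nr n K : ℕ} (H : Matrix (Fin nr) (Fin n) ℂ)
    (A : Fin K → Matrix (Fin n) (Fin n) ℂ) :
    Matrix (Fin n × (Fin nr × Fin 2)) (Fin K) ℝ :=
  ((1 : Matrix (Fin n) (Fin n) ℝ) ⊗ₖ checkMat H) * genMat A

lemma heq_entry {nr n K : ℕ} (H : Matrix (Fin nr) (Fin n) ℂ)
    (A : Fin K → Matrix (Fin n) (Fin n) ℂ) (c : Fin n) (r : Fin nr) (s : Fin 2) (k : Fin K) :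
    heqMat H A (c, (r, s)) k =
      if s = 0 then ((H * A k) r c).re else ((H * A k) r c).im := by
  simp only [heqMat, Matrix.mul_apply, Fintype.sum_prod_type, kroneckerMap_apply,
    Matrix.one_apply, ite_mul, one_mul, zero_mul, Finset.sum_ite_eq, Finset.mem_univ, if_true]
  fin_cases s <;>
    simp [checkMat, genMat, Matrix.mul_apply, Complex.re_sum, Complex.im_sum,
      Complex.mul_re, Complex.mul_im, Fin.sum_univ_two, sub_eq_add_neg,
      Finset.sum_add_distrib, Finset.sum_neg_distrib, add_comm]

/-- If `A_i A_j^H + A_j A_i^H = 0` then, for every channel realization `H`, the columns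
`h_i` and `h_j` of `H_eq = (I ⊗ Ȟ)G` are orthogonal. -/
theorem columns_orthogonal_of_hr_orthogonal {nr n K : ℕ}
    (A : Fin K → Matrix (Fin n) (Fin n) ℂ) (i j : Fin K)
    (hA : A i * (A j)ᴴ + A j * (A i)ᴴ = 0)
    (H : Matrix (Fin nr) (Fin n) ℂ) :
    ∑ idx, heqMat H A idx i * heqMat H A idx j = 0 := by
  have step1 : ∑ idx, heqMat H A idx i * heqMat H A idx j
      = ∑ c : Fin n, ∑ r : Fin nr, ((H * A i) r c * star ((H * A j) r c)).re := by
    rw [Fintype.sum_prod_type]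
    refine Finset.sum_congr rfl fun c _ => ?_
    rw [Fintype.sum_prod_type]
    refine Finset.sum_congr rfl fun r _ => ?_
    rw [Fin.sum_univ_two, heq_entry, heq_entry, heq_entry, heq_entry]
    simp [Complex.mul_re, Complex.star_def, Complex.conj_re, Complex.conj_im]
  have step2 : ∑ c : Fin n, ∑ r : Fin nr, ((H * A i) r c * star ((H * A j) r c)).re
      = (((H * A i) * ((H * A j))ᴴ).trace).re := by
    rw [Matrix.trace, Finset.sum_comm]
    simp only [Matrix.diag_apply, Matrix.mul_apply, Matrix.conjTranspose_apply, Complex.re_sum]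
  have h1 : (H * A i) * ((H * A j))ᴴ = H * (A i * (A j)ᴴ) * Hᴴ := by
    rw [Matrix.conjTranspose_mul]
    simp [Matrix.mul_assoc]
  have h3 : (H * (A j * (A i)ᴴ) * Hᴴ) = (H * (A i * (A j)ᴴ) * Hᴴ)ᴴ := by
    simp [Matrix.conjTranspose_mul, Matrix.mul_assoc]
  have h2 : H * (A i * (A j)ᴴ) * Hᴴ + H * (A j * (A i)ᴴ) * Hᴴ = 0 := by
    rw [← Matrix.add_mul, ← Matrix.mul_add, hA, Matrix.mul_zero, Matrix.zero_mul]
  set T := (H * (A i * (A j)ᴴ) * Hᴴ).trace with hT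
  have hsum : T + star T = 0 := by
    have := congrArg Matrix.trace h2
    rwa [Matrix.trace_add, h3, Matrix.trace_conjTranspose, Matrix.trace_zero] at this
  have hre : T.re = 0 := by
    have := congrArg Complex.re hsum
    simp [Complex.add_re, Complex.star_def, Complex.conj_re] at this
    linarith
  rw [step1, step2, h1, ← hT, hre]
end

section
/- For a g-group decodable STBC with ordered partition Γ_1,...,Γ_g (i.e., A_l A_m^H + A_m A_l^H = 0 whenever l, m lie in different groups), the R matrix arising from QR decomposition of H_eq (assuming H_eq has full column rank) is block-diagonal upper-triangular: r_{ij} = 0 whenever i ∈ Γ_p, j ∈ Γ_q with p ≠ q. -/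
open Matrix Finset Kronecker
open scoped RealInnerProductSpace

lemma heq_apply {nr n K : ℕ} (H : Matrix (Fin nr) (Fin n) ℂ)
    (A : Fin K → Matrix (Fin n) (Fin n) ℂ) (a : Fin n) (p : Fin nr) (s : Fin 2) (k : Fin K) :
    heqMat H A (a, (p, s)) k = if s = 0 then ((H * A k) p a).re else ((H * A k) p a).im := by
  fin_cases s <;>
  · simp only [heqMat, Matrix.mul_apply, kroneckerMap_apply, genMat, checkMat,
      Fintype.sum_prod_type, Fin.sum_univ_two, Matrix.one_apply, Complex.mul_re, Complex.mul_im,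
      ite_mul, one_mul, zero_mul, mul_ite, mul_zero, Complex.re_sum, Complex.im_sum]
    rw [Finset.sum_comm]
    simp [Finset.sum_add_distrib, Finset.sum_ite_eq', Finset.sum_sub_distrib]
    ring

lemma inner_h_eq {nr n K : ℕ} (H : Matrix (Fin nr) (Fin n) ℂ)
    (A : Fin K → Matrix (Fin n) (Fin n) ℂ)
    (h : Fin K → EuclideanSpace ℝ (Fin n × (Fin nr × Fin 2)))
    (hh : ∀ k idx, h k idx = heqMat H A idx k) (l m : Fin K) :
    ⟪h l, h m⟫ = (Matrix.trace ((H * A l) * (H * A m)ᴴ)).re := by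
  have : ⟪h l, h m⟫ = ∑ idx : Fin n × (Fin nr × Fin 2), h l idx * h m idx := by
    simp [PiLp.inner_apply]
    exact Finset.sum_congr rfl fun _ _ => mul_comm _ _
  rw [this]
  simp only [hh]
  rw [Fintype.sum_prod_type]
  simp only [Fintype.sum_prod_type, Fin.sum_univ_two]
  simp only [heq_apply, Matrix.trace, Matrix.diag, Matrix.mul_apply, Matrix.conjTranspose_apply,
    Complex.re_sum, Fintype.sum_prod_type]
  rw [Finset.sum_comm]
  refine Finset.sum_congr rfl fun a _ => Finset.sum_congr rfl fun p _ => ?_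
  simp [Complex.mul_re, Finset.sum_add_distrib, Finset.sum_sub_distrib, sub_eq_add_neg,
    Finset.sum_neg_distrib]
  ring

lemma inner_h_zero {nr n K g : ℕ} (H : Matrix (Fin nr) (Fin n) ℂ)
    (A : Fin K → Matrix (Fin n) (Fin n) ℂ) (grp : Fin K → Fin g)
    (hA : ∀ l m : Fin K, grp l ≠ grp m → A l * (A m)ᴴ + A m * (A l)ᴴ = 0)
    (h : Fin K → EuclideanSpace ℝ (Fin n × (Fin nr × Fin 2)))
    (hh : ∀ k idx, h k idx = heqMat H A idx k) (l m : Fin K) (hg : grp l ≠ grp m) :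
    ⟪h l, h m⟫ = 0 := by
  rw [inner_h_eq H A h hh l m]
  set T := Matrix.trace ((H * A l) * (H * A m)ᴴ) with hT
  have hstar : Matrix.trace ((H * A m) * (H * A l)ᴴ) = star T := by
    rw [hT, ← Matrix.trace_conjTranspose]
    congr 1
    simp [Matrix.conjTranspose_mul, Matrix.mul_assoc]
  have hsum : T + star T = 0 := by
    rw [← hstar, hT]
    have : (H * A l) * (H * A m)ᴴ + (H * A m) * (H * A l)ᴴ
        = H * (A l * (A m)ᴴ + A m * (A l)ᴴ) * Hᴴ := by
      simp [Matrix.conjTranspose_mul, Matrix.mul_add, Matrix.add_mul, Matrix.mul_assoc]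
    rw [← Matrix.trace_add, this, hA l m hg]
    simp
  have := congrArg Complex.re hsum
  simp at this
  linarith

/-- For a `g`-group decodable STBC (cross-group weight matrices are Hurwitz–Radon
orthogonal, groups occupying consecutive index ranges), the R-factor of the QR
(Gram–Schmidt) decomposition of `H_eq` is block-diagonal upper-triangular:
`r_{ij} = ⟨q_i, h_j⟩ = 0` for `i < j` in different groups. -/
theorem multigroup_R_block_diagonal {nr n K g : ℕ}
    (A : Fin K → Matrix (Fin n) (Fin n) ℂ)
    (grp : Fin K → Fin g) (hmono : Monotone grp)
    (hA : ∀ l m : Fin K, grp l ≠ grp m → A l * (A m)ᴴ + A m * (A l)ᴴ = 0)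
    (H : Matrix (Fin nr) (Fin n) ℂ)
    (h q r : Fin K → EuclideanSpace ℝ (Fin n × (Fin nr × Fin 2)))
    (hh : ∀ k idx, h k idx = heqMat H A idx k)
    (hr : ∀ i, r i = h i - ∑ l ∈ Finset.Iio i, ⟪q l, h i⟫ • q l)
    (hrne : ∀ i, r i ≠ 0)
    (hq : ∀ i, q i = (‖r i‖)⁻¹ • r i) :
    ∀ i j : Fin K, i < j → grp i ≠ grp j → ⟪q i, h j⟫ = 0 := by
  have key : ∀ N : ℕ, ∀ i j : Fin K, (i : ℕ) < N → (∀ l, l ≤ i → grp l ≠ grp j) →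
      ⟪q i, h j⟫ = 0 := by
    intro N
    induction N with
    | zero => exact fun i j hi _ => absurd hi (Nat.not_lt_zero _)
    | succ N IH' =>
      intro i j hi hij
      rw [hq i, real_inner_smul_left]
      have : ⟪r i, h j⟫ = 0 := by
        rw [hr i, inner_sub_left, sum_inner]
        have h1 : ⟪h i, h j⟫ = 0 :=
          inner_h_zero H A grp hA h hh i j (hij i le_rfl)
        have h2 : ∀ l ∈ Finset.Iio i, ⟪(⟪q l, h i⟫ : ℝ) • q l, h j⟫ = 0 := by
          intro l hl
          rw [Finset.mem_Iio] at hl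
          rw [real_inner_smul_left,
            IH' l j (by omega) (fun l' hl' => hij l' (hl'.trans hl.le)), mul_zero]
        rw [Finset.sum_congr rfl h2, h1]
        simp
      rw [this, mul_zero]
  intro i j hij hg
  refine key (i + 1) i j (Nat.lt_succ_self _) fun l hl => ?_
  have h1 : grp l ≤ grp i := hmono hl
  have h2 : grp i < grp j := lt_of_le_of_ne (hmono hij.le) hg
  exact ne_of_lt (lt_of_le_of_lt h1 h2)
end
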